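/- Let E be a right H-comodule algebra and γ : H → E a convolution-invertible morphism of right H-comodule algebras. Then for each h ∈ H and u ∈ E^{coH}, the element h▷u := Σ γ(h₍₁₎) u γ(Sh₍₂₎) lies in E^{coH}, and ▷ makes E^{coH} an H-module algebra. -/

import Mathlib

open TensorProduct

namespace HopfAux

open Coalgebra

variable {k : Type*} [CommSemiring k]

section Conv

variable {C : Type*} [AddCommMonoid C] [Module k C] [Coalgebra k C]
variable {A : Type*} [Semiring A] [Algebra k A]

/-- Convolution product on linear maps from a coalgebra to an algebra. -/
noncomputable def conv (f g : C →ₗ[k] A) : C →ₗ[k] A :=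
  LinearMap.mul' k A ∘ₗ TensorProduct.map f g ∘ₗ Coalgebra.comul

/-- Convolution unit. -/
noncomputable def cunit : C →ₗ[k] A := Algebra.linearMap k A ∘ₗ Coalgebra.counit

lemma cunit_apply (c : C) : (cunit (k := k) (C := C) (A := A)) c = counit (R := k) c • (1 : A) := by
  simp [cunit, Algebra.smul_def]

lemma conv_apply_repr {ι : Type*} (f g : C →ₗ[k] A) {a : C} (r : Coalgebra.Repr k a ι) :
    conv f g a = ∑ i ∈ r.index, f (r.left i) * g (r.right i) := by
  simp only [conv, LinearMap.comp_apply, ← r.eq, map_sum, TensorProduct.map_tmul,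
    LinearMap.mul'_apply]

lemma sum_counit_smul_right {ι : Type*} {a : C} (r : Coalgebra.Repr k a ι) :
    ∑ i ∈ r.index, counit (R := k) (r.right i) • r.left i = a := by
  have h := congrArg (TensorProduct.rid k C) (sum_tmul_counit_eq r)
  rw [map_sum] at h
  simp only [TensorProduct.rid_tmul, one_smul] at h
  exact h

lemma sum_counit_smul_left {ι : Type*} {a : C} (r : Coalgebra.Repr k a ι) :
    ∑ i ∈ r.index, counit (R := k) (r.left i) • r.right i = a := by
  have h := congrArg (TensorProduct.lid k C) (sum_counit_tmul_eq r)
  rw [map_sum] at h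
  simp only [TensorProduct.lid_tmul, one_smul] at h
  exact h

lemma conv_add_left (f f' g : C →ₗ[k] A) : conv (f + f') g = conv f g + conv f' g := by
  ext a
  rw [LinearMap.add_apply, conv_apply_repr (f + f') g (ℛ k a), conv_apply_repr f g (ℛ k a),
    conv_apply_repr f' g (ℛ k a), ← Finset.sum_add_distrib]
  simp [add_mul]

lemma conv_add_right (f g g' : C →ₗ[k] A) : conv f (g + g') = conv f g + conv f g' := by
  ext a
  rw [LinearMap.add_apply, conv_apply_repr f (g + g') (ℛ k a), conv_apply_repr f g (ℛ k a),
    conv_apply_repr f g' (ℛ k a), ← Finset.sum_add_distrib]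
  simp [mul_add]

lemma conv_zero_left (g : C →ₗ[k] A) : conv (0 : C →ₗ[k] A) g = 0 := by
  ext a
  rw [conv_apply_repr _ g (ℛ k a)]
  simp

lemma conv_zero_right (f : C →ₗ[k] A) : conv f (0 : C →ₗ[k] A) = 0 := by
  ext a
  rw [conv_apply_repr f _ (ℛ k a)]
  simp

lemma conv_smul_left (r : k) (f g : C →ₗ[k] A) : conv (r • f) g = r • conv f g := by
  ext a
  rw [LinearMap.smul_apply, conv_apply_repr (r • f) g (ℛ k a), conv_apply_repr f g (ℛ k a),
    Finset.smul_sum]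
  simp [smul_mul_assoc]

lemma conv_smul_right (r : k) (f g : C →ₗ[k] A) : conv f (r • g) = r • conv f g := by
  ext a
  rw [LinearMap.smul_apply, conv_apply_repr f (r • g) (ℛ k a), conv_apply_repr f g (ℛ k a),
    Finset.smul_sum]
  simp [mul_smul_comm]

lemma conv_assoc (f g h : C →ₗ[k] A) : conv (conv f g) h = conv f (conv g h) := by
  ext a
  let r := ℛ k a
  let a₁ : (i : r.ι) → Coalgebra.Repr k (r.left i) (C × C) := fun i => ℛ k (r.left i)
  let a₂ : (i : r.ι) → Coalgebra.Repr k (r.right i) (C × C) := fun i => ℛ k (r.right i)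
  have key := Coalgebra.sum_map_tmul_tmul_eq (R := k) (B := A) f g h a
    (repr := r) (a₁ := a₁) (a₂ := a₂)
  have key2 := congrArg (LinearMap.mul' k A ∘ₗ LinearMap.lTensor A (LinearMap.mul' k A)) key
  simp only [map_sum, LinearMap.comp_apply, LinearMap.lTensor_tmul, LinearMap.mul'_apply] at key2
  rw [conv_apply_repr (conv f g) h r, conv_apply_repr f (conv g h) r]
  calc ∑ i ∈ r.index, conv f g (r.left i) * h (r.right i)
      = ∑ i ∈ r.index, ∑ j ∈ (a₁ i).index,
          f ((a₁ i).left j) * (g ((a₁ i).right j) * h (r.right i)) := by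
        refine Finset.sum_congr rfl fun i _ => ?_
        rw [conv_apply_repr f g (a₁ i), Finset.sum_mul]
        simp [mul_assoc]
    _ = ∑ i ∈ r.index, ∑ j ∈ (a₂ i).index,
          f (r.left i) * (g ((a₂ i).left j) * h ((a₂ i).right j)) := key2.symm
    _ = ∑ i ∈ r.index, f (r.left i) * conv g h (r.right i) := by
        refine Finset.sum_congr rfl fun i _ => ?_
        rw [conv_apply_repr g h (a₂ i), Finset.mul_sum]

lemma conv_cunit (f : C →ₗ[k] A) : conv f cunit = f := by
  ext a
  rw [conv_apply_repr f cunit (ℛ k a)]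
  calc ∑ i ∈ (ℛ k a).index, f ((ℛ k a).left i) * cunit ((ℛ k a).right i)
      = ∑ i ∈ (ℛ k a).index, counit (R := k) ((ℛ k a).right i) • f ((ℛ k a).left i) := by
        refine Finset.sum_congr rfl fun i _ => ?_
        rw [cunit_apply, mul_smul_comm, mul_one]
    _ = f (∑ i ∈ (ℛ k a).index, counit (R := k) ((ℛ k a).right i) • (ℛ k a).left i) := by
        rw [map_sum]; simp
    _ = f a := by rw [sum_counit_smul_right]

lemma cunit_conv (f : C →ₗ[k] A) : conv cunit f = f := by
  ext a
  rw [conv_apply_repr cunit f (ℛ k a)]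
  calc ∑ i ∈ (ℛ k a).index, cunit ((ℛ k a).left i) * f ((ℛ k a).right i)
      = ∑ i ∈ (ℛ k a).index, counit (R := k) ((ℛ k a).left i) • f ((ℛ k a).right i) := by
        refine Finset.sum_congr rfl fun i _ => ?_
        rw [cunit_apply, smul_mul_assoc, one_mul]
    _ = f (∑ i ∈ (ℛ k a).index, counit (R := k) ((ℛ k a).left i) • (ℛ k a).right i) := by
        rw [map_sum]; simp
    _ = f a := by rw [sum_counit_smul_left]

lemma algHom_comp_conv {A' : Type*} [Semiring A'] [Algebra k A'] (φ : A →ₐ[k] A')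
    (f g : C →ₗ[k] A) :
    φ.toLinearMap ∘ₗ conv f g = conv (φ.toLinearMap ∘ₗ f) (φ.toLinearMap ∘ₗ g) := by
  ext a
  rw [LinearMap.comp_apply, conv_apply_repr f g (ℛ k a), conv_apply_repr _ _ (ℛ k a)]
  simp

lemma algHom_comp_cunit {A' : Type*} [Semiring A'] [Algebra k A'] (φ : A →ₐ[k] A') :
    φ.toLinearMap ∘ₗ (cunit (k := k) (C := C) (A := A)) = cunit := by
  ext a
  simp [cunit_apply]

lemma conv_mulRight (w : A) (f g : C →ₗ[k] A) :
    conv f (LinearMap.mulRight k w ∘ₗ g) = LinearMap.mulRight k w ∘ₗ conv f g := by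
  ext a
  rw [LinearMap.comp_apply, conv_apply_repr _ _ (ℛ k a), conv_apply_repr f g (ℛ k a),
    LinearMap.mulRight_apply, Finset.sum_mul]
  simp [mul_assoc]

lemma conv_mulRight_cunit (w : A) (g : C →ₗ[k] A) :
    conv (LinearMap.mulRight k w ∘ₗ cunit) g = LinearMap.mulLeft k w ∘ₗ g := by
  ext a
  rw [conv_apply_repr _ g (ℛ k a), LinearMap.comp_apply, LinearMap.mulLeft_apply]
  calc ∑ i ∈ (ℛ k a).index,
        (LinearMap.mulRight k w ∘ₗ cunit) ((ℛ k a).left i) * g ((ℛ k a).right i)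
      = ∑ i ∈ (ℛ k a).index,
          w * (counit (R := k) ((ℛ k a).left i) • g ((ℛ k a).right i)) := by
        refine Finset.sum_congr rfl fun i _ => ?_
        simp [cunit_apply, smul_mul_assoc, mul_smul_comm]
    _ = w * g a := by
        rw [← Finset.mul_sum]
        congr 1
        calc ∑ i ∈ (ℛ k a).index, counit (R := k) ((ℛ k a).left i) • g ((ℛ k a).right i)
            = g (∑ i ∈ (ℛ k a).index, counit (R := k) ((ℛ k a).left i) • (ℛ k a).right i) := by
              rw [map_sum]; simp only [map_smul]
          _ = g a := by rw [sum_counit_smul_left]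

lemma conv_mulRight_mulLeft (u v : A) (f g : C →ₗ[k] A) :
    conv (LinearMap.mulRight k u ∘ₗ f) (LinearMap.mulLeft k v ∘ₗ g) =
      conv (LinearMap.mulRight k (u * v) ∘ₗ f) g := by
  ext a
  rw [conv_apply_repr _ _ (ℛ k a), conv_apply_repr _ _ (ℛ k a)]
  refine Finset.sum_congr rfl fun i _ => ?_
  simp [mul_assoc]

end Conv

section Hopf

variable {H : Type*} [Semiring H] [HopfAlgebra k H]
variable {E : Type*} [Semiring E] [Algebra k E]

/-- Product of two representations, using that comultiplication is multiplicative. -/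
noncomputable def mulRepr {ι κ : Type*} {a b : H} (r : Coalgebra.Repr k a ι) (s : Coalgebra.Repr k b κ) :
    Coalgebra.Repr k (a * b) (ι × κ) where
  index := r.index ×ˢ s.index
  left := fun p => r.left p.1 * s.left p.2
  right := fun p => r.right p.1 * s.right p.2
  eq := by
    rw [Finset.sum_product, Bialgebra.comul_mul, ← r.eq, ← s.eq, Finset.sum_mul_sum]
    simp [Algebra.TensorProduct.tmul_mul_tmul]

lemma antipode_one_eq : HopfAlgebra.antipode (R := k) (1 : H) = 1 := by
  have h := HopfAlgebra.mul_antipode_lTensor_comul_apply (R := k) (A := H) 1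
  rw [Bialgebra.comul_one, Algebra.TensorProduct.one_def] at h
  simpa using h

lemma gamma_conv_gammaS (γ : H →ₐ[k] E) :
    conv γ.toLinearMap (γ.toLinearMap ∘ₗ HopfAlgebra.antipode (R := k)) = cunit := by
  ext a
  rw [conv_apply_repr _ _ (ℛ k a), cunit_apply]
  calc ∑ i ∈ (ℛ k a).index,
        γ.toLinearMap ((ℛ k a).left i) *
          (γ.toLinearMap ∘ₗ HopfAlgebra.antipode (R := k)) ((ℛ k a).right i)
      = γ (∑ i ∈ (ℛ k a).index,
          (ℛ k a).left i * HopfAlgebra.antipode (R := k) ((ℛ k a).right i)) := by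
        rw [map_sum]; simp
    _ = counit (R := k) a • (1 : E) := by
        rw [HopfAlgebra.sum_mul_antipode_eq_smul (ℛ k a)]
        simp

lemma gammaS_conv_gamma (γ : H →ₐ[k] E) :
    conv (γ.toLinearMap ∘ₗ HopfAlgebra.antipode (R := k)) γ.toLinearMap = cunit := by
  ext a
  rw [conv_apply_repr _ _ (ℛ k a), cunit_apply]
  calc ∑ i ∈ (ℛ k a).index,
        (γ.toLinearMap ∘ₗ HopfAlgebra.antipode (R := k)) ((ℛ k a).left i) *
          γ.toLinearMap ((ℛ k a).right i)
      = γ (∑ i ∈ (ℛ k a).index,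
          HopfAlgebra.antipode (R := k) ((ℛ k a).left i) * (ℛ k a).right i) := by
        rw [map_sum]; simp
    _ = counit (R := k) a • (1 : E) := by
        rw [HopfAlgebra.sum_antipode_mul_eq_smul (ℛ k a)]
        simp

end Hopf

section ConvAlg

variable {C : Type*} [AddCommMonoid C] [Module k C] [Coalgebra k C]
variable {A : Type*} [Semiring A] [Algebra k A]

/-- The convolution semiring structure on `C →ₗ[k] A`. -/
noncomputable scoped instance convSemiring : Semiring (C →ₗ[k] A) :=
  { (inferInstance : AddCommMonoid (C →ₗ[k] A)) with
    mul := conv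
    one := cunit
    mul_assoc := conv_assoc
    one_mul := cunit_conv
    mul_one := conv_cunit
    left_distrib := conv_add_right
    right_distrib := fun f g h => conv_add_left f g h
    zero_mul := conv_zero_left
    mul_zero := conv_zero_right }

noncomputable scoped instance convAlgebra : Algebra k (C →ₗ[k] A) :=
  Algebra.ofModule (fun r x y => conv_smul_left r x y) (fun r x y => conv_smul_right r x y)

lemma conv_mul_def (f g : C →ₗ[k] A) : f * g = conv f g := rfl
lemma conv_one_def : (1 : C →ₗ[k] A) = cunit := rfl

end ConvAlg

section AntipodeMul

variable {H : Type*} [Semiring H] [HopfAlgebra k H]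
variable {E : Type*} [Semiring E] [Algebra k E]

local notation "𝒮" => HopfAlgebra.antipode (R := k)

/-- `g ↦ (h ↦ γ (g * h))`. -/
noncomputable def mA (γ : H →ₐ[k] E) : H →ₗ[k] (H →ₗ[k] E) :=
  (LinearMap.llcomp k H H E γ.toLinearMap) ∘ₗ (LinearMap.mul k H)

/-- `g ↦ (h ↦ γ (S (g * h)))`. -/
noncomputable def mB (γ : H →ₐ[k] E) : H →ₗ[k] (H →ₗ[k] E) :=
  (LinearMap.llcomp k H H E (γ.toLinearMap ∘ₗ 𝒮)) ∘ₗ (LinearMap.mul k H)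

/-- `g ↦ (h ↦ γ (S h) * γ (S g))`. -/
noncomputable def mG (γ : H →ₐ[k] E) : H →ₗ[k] (H →ₗ[k] E) :=
  ((LinearMap.llcomp k H E E).flip (γ.toLinearMap ∘ₗ 𝒮)) ∘ₗ
    (LinearMap.mul k E).flip ∘ₗ (γ.toLinearMap ∘ₗ 𝒮)

@[simp] lemma mA_apply (γ : H →ₐ[k] E) (g h : H) : mA γ g h = γ (g * h) := rfl
@[simp] lemma mB_apply (γ : H →ₐ[k] E) (g h : H) : mB γ g h = γ (𝒮 (g * h)) := rfl
@[simp] lemma mG_apply (γ : H →ₐ[k] E) (g h : H) : mG γ g h = γ (𝒮 h) * γ (𝒮 g) := rfl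

lemma cunit_cunit_apply (g h : H) :
    (cunit (k := k) (C := H) (A := H →ₗ[k] E)) g h = (counit (R := k) g * counit (R := k) h) • 1 := by
  rw [cunit_apply, LinearMap.smul_apply, conv_one_def, cunit_apply, smul_smul]

lemma conv_mA_mB (γ : H →ₐ[k] E) : conv (mA γ) (mB γ) = cunit := by
  refine LinearMap.ext fun g => LinearMap.ext fun h => ?_
  rw [cunit_cunit_apply]
  calc (conv (mA γ) (mB γ) g) h
      = ∑ i ∈ (ℛ k g).index, (mA γ ((ℛ k g).left i) * mB γ ((ℛ k g).right i)) h := by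
        rw [conv_apply_repr _ _ (ℛ k g), LinearMap.sum_apply]
    _ = ∑ i ∈ (ℛ k g).index, ∑ j ∈ (ℛ k h).index,
          γ (((ℛ k g).left i * (ℛ k h).left j) * 𝒮 ((ℛ k g).right i * (ℛ k h).right j)) := by
        refine Finset.sum_congr rfl fun i _ => ?_
        rw [conv_mul_def, conv_apply_repr _ _ (ℛ k h)]
        refine Finset.sum_congr rfl fun j _ => ?_
        simp [map_mul]
    _ = γ (∑ p ∈ (mulRepr (ℛ k g) (ℛ k h)).index,
          (mulRepr (ℛ k g) (ℛ k h)).left p * 𝒮 ((mulRepr (ℛ k g) (ℛ k h)).right p)) := by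
        rw [map_sum]
        exact (Finset.sum_product (ℛ k g).index (ℛ k h).index
          (fun p => γ ((mulRepr (ℛ k g) (ℛ k h)).left p *
            𝒮 ((mulRepr (ℛ k g) (ℛ k h)).right p)))).symm
    _ = (counit (R := k) g * counit (R := k) h) • 1 := by
        rw [HopfAlgebra.sum_mul_antipode_eq_smul (mulRepr (ℛ k g) (ℛ k h))]
        simp [Bialgebra.counit_mul]

lemma conv_mB_mA (γ : H →ₐ[k] E) : conv (mB γ) (mA γ) = cunit := by
  refine LinearMap.ext fun g => LinearMap.ext fun h => ?_
  rw [cunit_cunit_apply]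
  calc (conv (mB γ) (mA γ) g) h
      = ∑ i ∈ (ℛ k g).index, (mB γ ((ℛ k g).left i) * mA γ ((ℛ k g).right i)) h := by
        rw [conv_apply_repr _ _ (ℛ k g), LinearMap.sum_apply]
    _ = ∑ i ∈ (ℛ k g).index, ∑ j ∈ (ℛ k h).index,
          γ (𝒮 ((ℛ k g).left i * (ℛ k h).left j) * ((ℛ k g).right i * (ℛ k h).right j)) := by
        refine Finset.sum_congr rfl fun i _ => ?_
        rw [conv_mul_def, conv_apply_repr _ _ (ℛ k h)]
        refine Finset.sum_congr rfl fun j _ => ?_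
        simp [map_mul]
    _ = γ (∑ p ∈ (mulRepr (ℛ k g) (ℛ k h)).index,
          𝒮 ((mulRepr (ℛ k g) (ℛ k h)).left p) * (mulRepr (ℛ k g) (ℛ k h)).right p) := by
        rw [map_sum]
        exact (Finset.sum_product (ℛ k g).index (ℛ k h).index
          (fun p => γ (𝒮 ((mulRepr (ℛ k g) (ℛ k h)).left p) *
            (mulRepr (ℛ k g) (ℛ k h)).right p))).symm
    _ = (counit (R := k) g * counit (R := k) h) • 1 := by
        rw [HopfAlgebra.sum_antipode_mul_eq_smul (mulRepr (ℛ k g) (ℛ k h))]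
        simp [Bialgebra.counit_mul]

lemma conv_mA_mG (γ : H →ₐ[k] E) : conv (mA γ) (mG γ) = cunit := by
  refine LinearMap.ext fun g => LinearMap.ext fun h => ?_
  rw [cunit_cunit_apply]
  calc (conv (mA γ) (mG γ) g) h
      = ∑ i ∈ (ℛ k g).index, (mA γ ((ℛ k g).left i) * mG γ ((ℛ k g).right i)) h := by
        rw [conv_apply_repr _ _ (ℛ k g), LinearMap.sum_apply]
    _ = ∑ i ∈ (ℛ k g).index,
          γ ((ℛ k g).left i) *
            (γ (∑ j ∈ (ℛ k h).index, (ℛ k h).left j * 𝒮 ((ℛ k h).right j)) *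
              γ (𝒮 ((ℛ k g).right i))) := by
        refine Finset.sum_congr rfl fun i _ => ?_
        rw [conv_mul_def, conv_apply_repr _ _ (ℛ k h), map_sum, Finset.sum_mul, Finset.mul_sum]
        refine Finset.sum_congr rfl fun j _ => ?_
        simp [map_mul, mul_assoc]
    _ = counit (R := k) h • ∑ i ∈ (ℛ k g).index,
          γ ((ℛ k g).left i * 𝒮 ((ℛ k g).right i)) := by
        rw [HopfAlgebra.sum_mul_antipode_eq_smul (ℛ k h), Finset.smul_sum]
        refine Finset.sum_congr rfl fun i _ => ?_
        simp [map_mul, mul_smul_comm, smul_mul_assoc]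
    _ = (counit (R := k) g * counit (R := k) h) • 1 := by
        rw [← map_sum, HopfAlgebra.sum_mul_antipode_eq_smul (ℛ k g)]
        simp [smul_smul, mul_comm]

/-- The key fact: the antipode is anti-multiplicative after composing with `γ`. -/
lemma map_antipode_mul (γ : H →ₐ[k] E) (g h : H) :
    γ (𝒮 (g * h)) = γ (𝒮 h) * γ (𝒮 g) := by
  have hBG : mB γ = mG γ := by
    calc mB γ = conv (mB γ) cunit := (conv_cunit _).symm
      _ = conv (mB γ) (conv (mA γ) (mG γ)) := by rw [conv_mA_mG]
      _ = conv (conv (mB γ) (mA γ)) (mG γ) := (conv_assoc _ _ _).symm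
      _ = conv cunit (mG γ) := by rw [conv_mB_mA]
      _ = mG γ := cunit_conv _
  have := LinearMap.congr_fun (LinearMap.congr_fun hBG g) h
  simpa using this

@[simp] lemma mulRepr_left {ι κ : Type*} {a b : H} (r : Coalgebra.Repr k a ι) (s : Coalgebra.Repr k b κ)
    (p : ι × κ) : (mulRepr r s).left p = r.left p.1 * s.left p.2 := rfl

@[simp] lemma mulRepr_right {ι κ : Type*} {a b : H} (r : Coalgebra.Repr k a ι) (s : Coalgebra.Repr k b κ)
    (p : ι × κ) : (mulRepr r s).right p = r.right p.1 * s.right p.2 := rfl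

lemma mulRepr_index {ι κ : Type*} {a b : H} (r : Coalgebra.Repr k a ι) (s : Coalgebra.Repr k b κ) :
    (mulRepr r s).index = r.index ×ˢ s.index := rfl

/-- Elementwise lemma: `Σ γ(S h₁)⊗1 · ρ(γ h₂) = 1 ⊗ h`. -/
lemma conv_jσ_α (ρ : E →ₐ[k] E ⊗[k] H) (γ : H →ₐ[k] E)
    (hγ : ∀ h : H, ρ (γ h) =
      TensorProduct.map γ.toLinearMap LinearMap.id (Coalgebra.comul (R := k) h)) :
    conv ((Algebra.TensorProduct.includeLeft : E →ₐ[k] E ⊗[k] H).toLinearMap ∘ₗ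
        (γ.toLinearMap ∘ₗ 𝒮)) (ρ.toLinearMap ∘ₗ γ.toLinearMap) =
      TensorProduct.mk k E H 1 := by
  ext h
  let r := ℛ k h
  let a₁ : (i : r.ι) → Coalgebra.Repr k (r.left i) (H × H) := fun i => ℛ k (r.left i)
  let a₂ : (i : r.ι) → Coalgebra.Repr k (r.right i) (H × H) := fun i => ℛ k (r.right i)
  have key : ∑ i ∈ r.index, ∑ j ∈ (a₂ i).index,
      ((𝒮 (r.left i) : H) * (a₂ i).left j) ⊗ₜ[k] (a₂ i).right j = (1 : H) ⊗ₜ[k] h := by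
    have base := Coalgebra.sum_tmul_tmul_eq r a₁ a₂
    have base2 := congrArg (LinearMap.rTensor H (LinearMap.mul' k H ∘ₗ
        LinearMap.rTensor H (𝒮 : H →ₗ[k] H)) ∘ₗ (TensorProduct.assoc k H H H).symm.toLinearMap)
      base
    simp only [map_sum, LinearMap.comp_apply, LinearEquiv.coe_coe,
      TensorProduct.assoc_symm_tmul, LinearMap.rTensor_tmul, LinearMap.mul'_apply] at base2
    rw [← base2]
    calc ∑ i ∈ r.index, ∑ j ∈ (a₁ i).index,
          ((𝒮 ((a₁ i).left j) : H) * (a₁ i).right j) ⊗ₜ[k] r.right i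
        = ∑ i ∈ r.index,
            (∑ j ∈ (a₁ i).index, (𝒮 ((a₁ i).left j) : H) * (a₁ i).right j) ⊗ₜ[k] r.right i := by
          refine Finset.sum_congr rfl fun i _ => ?_
          rw [TensorProduct.sum_tmul]
      _ = ∑ i ∈ r.index, (counit (R := k) (r.left i) • (1 : H)) ⊗ₜ[k] r.right i := by
          refine Finset.sum_congr rfl fun i _ => ?_
          rw [HopfAlgebra.sum_antipode_mul_eq_smul (a₁ i)]
      _ = (1 : H) ⊗ₜ[k] h := by
          calc ∑ i ∈ r.index, (counit (R := k) (r.left i) • (1 : H)) ⊗ₜ[k] r.right i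
              = (1 : H) ⊗ₜ[k] ∑ i ∈ r.index, counit (R := k) (r.left i) • r.right i := by
                rw [TensorProduct.tmul_sum]
                refine Finset.sum_congr rfl fun i _ => ?_
                rw [TensorProduct.smul_tmul, TensorProduct.tmul_smul]
            _ = (1 : H) ⊗ₜ[k] h := by rw [sum_counit_smul_left]
  rw [conv_apply_repr _ _ r]
  calc ∑ i ∈ r.index,
        ((Algebra.TensorProduct.includeLeft : E →ₐ[k] E ⊗[k] H).toLinearMap ∘ₗ
          (γ.toLinearMap ∘ₗ 𝒮)) (r.left i) *
          (ρ.toLinearMap ∘ₗ γ.toLinearMap) (r.right i)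
      = ∑ i ∈ r.index, ∑ j ∈ (a₂ i).index,
          γ ((𝒮 (r.left i) : H) * (a₂ i).left j) ⊗ₜ[k] (a₂ i).right j := by
        refine Finset.sum_congr rfl fun i _ => ?_
        rw [show (ρ.toLinearMap ∘ₗ γ.toLinearMap) (r.right i) =
          TensorProduct.map γ.toLinearMap LinearMap.id (Coalgebra.comul (r.right i)) from hγ _]
        rw [← (a₂ i).eq, map_sum, Finset.mul_sum]
        refine Finset.sum_congr rfl fun j _ => ?_
        simp [Algebra.TensorProduct.tmul_mul_tmul, map_mul]
    _ = TensorProduct.map γ.toLinearMap LinearMap.id ((1 : H) ⊗ₜ[k] h) := by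
        rw [← key, map_sum]
        refine Finset.sum_congr rfl fun i _ => ?_
        rw [map_sum]
        refine Finset.sum_congr rfl fun j _ => ?_
        simp
    _ = (TensorProduct.mk k E H 1) h := by simp

/-- Elementwise lemma: `Σ (γ h₁ · u ⊗ 1)·(1 ⊗ h₂) = ρ(γ h)·(u ⊗ 1)`. -/
lemma conv_β_δ (ρ : E →ₐ[k] E ⊗[k] H) (γ : H →ₐ[k] E)
    (hγ : ∀ h : H, ρ (γ h) =
      TensorProduct.map γ.toLinearMap LinearMap.id (Coalgebra.comul (R := k) h)) (u : E) :
    conv (LinearMap.mulRight k ((u : E) ⊗ₜ[k] (1 : H)) ∘ₗ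
        ((Algebra.TensorProduct.includeLeft : E →ₐ[k] E ⊗[k] H).toLinearMap ∘ₗ γ.toLinearMap))
      (TensorProduct.mk k E H 1) =
    LinearMap.mulRight k ((u : E) ⊗ₜ[k] (1 : H)) ∘ₗ (ρ.toLinearMap ∘ₗ γ.toLinearMap) := by
  ext h
  rw [conv_apply_repr _ _ (ℛ k h)]
  rw [show (LinearMap.mulRight k ((u : E) ⊗ₜ[k] (1 : H)) ∘ₗ
      (ρ.toLinearMap ∘ₗ γ.toLinearMap)) h =
      TensorProduct.map γ.toLinearMap LinearMap.id (Coalgebra.comul h) * (u ⊗ₜ[k] (1 : H)) by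
    simp only [LinearMap.comp_apply, LinearMap.mulRight_apply, AlgHom.toLinearMap_apply, hγ h]]
  rw [← (ℛ k h).eq, map_sum, Finset.sum_mul]
  refine Finset.sum_congr rfl fun i _ => ?_
  simp [Algebra.TensorProduct.tmul_mul_tmul]

/-- Map-level statement of stability of coinvariants. -/
lemma rho_comp_act (ρ : E →ₐ[k] E ⊗[k] H) (γ : H →ₐ[k] E)
    (hγ : ∀ h : H, ρ (γ h) =
      TensorProduct.map γ.toLinearMap LinearMap.id (Coalgebra.comul (R := k) h))
    (u : E) (hu : ρ u = u ⊗ₜ[k] (1 : H)) :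
    ρ.toLinearMap ∘ₗ
        conv (LinearMap.mulRight k u ∘ₗ γ.toLinearMap) (γ.toLinearMap ∘ₗ 𝒮) =
      (Algebra.TensorProduct.includeLeft : E →ₐ[k] E ⊗[k] H).toLinearMap ∘ₗ
        conv (LinearMap.mulRight k u ∘ₗ γ.toLinearMap) (γ.toLinearMap ∘ₗ 𝒮) := by
  have hRu : ρ.toLinearMap ∘ₗ (LinearMap.mulRight k u ∘ₗ γ.toLinearMap) =
      LinearMap.mulRight k (u ⊗ₜ[k] (1 : H)) ∘ₗ (ρ.toLinearMap ∘ₗ γ.toLinearMap) := by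
    ext x
    simp [map_mul, hu]
  have hjRu : (Algebra.TensorProduct.includeLeft : E →ₐ[k] E ⊗[k] H).toLinearMap ∘ₗ
      (LinearMap.mulRight k u ∘ₗ γ.toLinearMap) =
      LinearMap.mulRight k (u ⊗ₜ[k] (1 : H)) ∘ₗ
        ((Algebra.TensorProduct.includeLeft : E →ₐ[k] E ⊗[k] H).toLinearMap ∘ₗ
          γ.toLinearMap) := by
    ext x
    simp [Algebra.TensorProduct.tmul_mul_tmul]
  have hγσ : conv (ρ.toLinearMap ∘ₗ γ.toLinearMap)
      (ρ.toLinearMap ∘ₗ (γ.toLinearMap ∘ₗ 𝒮)) = cunit := by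
    rw [← algHom_comp_conv, gamma_conv_gammaS, algHom_comp_cunit]
  have hσγ : conv (ρ.toLinearMap ∘ₗ (γ.toLinearMap ∘ₗ 𝒮))
      (ρ.toLinearMap ∘ₗ γ.toLinearMap) = cunit := by
    rw [← algHom_comp_conv, gammaS_conv_gamma, algHom_comp_cunit]
  have hP : ρ.toLinearMap ∘ₗ
      conv (LinearMap.mulRight k u ∘ₗ γ.toLinearMap) (γ.toLinearMap ∘ₗ 𝒮) =
      conv (LinearMap.mulRight k (u ⊗ₜ[k] (1 : H)) ∘ₗ (ρ.toLinearMap ∘ₗ γ.toLinearMap))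
        (ρ.toLinearMap ∘ₗ (γ.toLinearMap ∘ₗ 𝒮)) := by
    rw [algHom_comp_conv, hRu]
  have hQ : (Algebra.TensorProduct.includeLeft : E →ₐ[k] E ⊗[k] H).toLinearMap ∘ₗ
      conv (LinearMap.mulRight k u ∘ₗ γ.toLinearMap) (γ.toLinearMap ∘ₗ 𝒮) =
      conv (LinearMap.mulRight k (u ⊗ₜ[k] (1 : H)) ∘ₗ
          ((Algebra.TensorProduct.includeLeft : E →ₐ[k] E ⊗[k] H).toLinearMap ∘ₗ
            γ.toLinearMap))
        ((Algebra.TensorProduct.includeLeft : E →ₐ[k] E ⊗[k] H).toLinearMap ∘ₗ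
          (γ.toLinearMap ∘ₗ 𝒮)) := by
    rw [algHom_comp_conv, hjRu]
  have hPα : conv (ρ.toLinearMap ∘ₗ
      conv (LinearMap.mulRight k u ∘ₗ γ.toLinearMap) (γ.toLinearMap ∘ₗ 𝒮))
      (ρ.toLinearMap ∘ₗ γ.toLinearMap) =
      LinearMap.mulRight k (u ⊗ₜ[k] (1 : H)) ∘ₗ (ρ.toLinearMap ∘ₗ γ.toLinearMap) := by
    rw [hP, conv_assoc, hσγ, conv_cunit]
  have hQα : conv ((Algebra.TensorProduct.includeLeft : E →ₐ[k] E ⊗[k] H).toLinearMap ∘ₗ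
      conv (LinearMap.mulRight k u ∘ₗ γ.toLinearMap) (γ.toLinearMap ∘ₗ 𝒮))
      (ρ.toLinearMap ∘ₗ γ.toLinearMap) =
      LinearMap.mulRight k (u ⊗ₜ[k] (1 : H)) ∘ₗ (ρ.toLinearMap ∘ₗ γ.toLinearMap) := by
    rw [hQ, conv_assoc, conv_jσ_α ρ γ hγ, conv_β_δ ρ γ hγ u]
  calc ρ.toLinearMap ∘ₗ
        conv (LinearMap.mulRight k u ∘ₗ γ.toLinearMap) (γ.toLinearMap ∘ₗ 𝒮)
      = conv (ρ.toLinearMap ∘ₗ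
          conv (LinearMap.mulRight k u ∘ₗ γ.toLinearMap) (γ.toLinearMap ∘ₗ 𝒮)) cunit :=
        (conv_cunit _).symm
    _ = conv (ρ.toLinearMap ∘ₗ
          conv (LinearMap.mulRight k u ∘ₗ γ.toLinearMap) (γ.toLinearMap ∘ₗ 𝒮))
          (conv (ρ.toLinearMap ∘ₗ γ.toLinearMap)
            (ρ.toLinearMap ∘ₗ (γ.toLinearMap ∘ₗ 𝒮))) := by rw [hγσ]
    _ = conv (conv (ρ.toLinearMap ∘ₗ
          conv (LinearMap.mulRight k u ∘ₗ γ.toLinearMap) (γ.toLinearMap ∘ₗ 𝒮))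
          (ρ.toLinearMap ∘ₗ γ.toLinearMap))
          (ρ.toLinearMap ∘ₗ (γ.toLinearMap ∘ₗ 𝒮)) := (conv_assoc _ _ _).symm
    _ = conv (LinearMap.mulRight k (u ⊗ₜ[k] (1 : H)) ∘ₗ (ρ.toLinearMap ∘ₗ γ.toLinearMap))
          (ρ.toLinearMap ∘ₗ (γ.toLinearMap ∘ₗ 𝒮)) := by rw [hPα]
    _ = conv (conv ((Algebra.TensorProduct.includeLeft : E →ₐ[k] E ⊗[k] H).toLinearMap ∘ₗ
          conv (LinearMap.mulRight k u ∘ₗ γ.toLinearMap) (γ.toLinearMap ∘ₗ 𝒮))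
          (ρ.toLinearMap ∘ₗ γ.toLinearMap))
          (ρ.toLinearMap ∘ₗ (γ.toLinearMap ∘ₗ 𝒮)) := by rw [hQα]
    _ = conv ((Algebra.TensorProduct.includeLeft : E →ₐ[k] E ⊗[k] H).toLinearMap ∘ₗ
          conv (LinearMap.mulRight k u ∘ₗ γ.toLinearMap) (γ.toLinearMap ∘ₗ 𝒮))
          (conv (ρ.toLinearMap ∘ₗ γ.toLinearMap)
            (ρ.toLinearMap ∘ₗ (γ.toLinearMap ∘ₗ 𝒮))) := conv_assoc _ _ _
    _ = conv ((Algebra.TensorProduct.includeLeft : E →ₐ[k] E ⊗[k] H).toLinearMap ∘ₗ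
          conv (LinearMap.mulRight k u ∘ₗ γ.toLinearMap) (γ.toLinearMap ∘ₗ 𝒮)) cunit := by
        rw [hγσ]
    _ = (Algebra.TensorProduct.includeLeft : E →ₐ[k] E ⊗[k] H).toLinearMap ∘ₗ
          conv (LinearMap.mulRight k u ∘ₗ γ.toLinearMap) (γ.toLinearMap ∘ₗ 𝒮) :=
        conv_cunit _

end AntipodeMul

end HopfAux


open TensorProduct

/-- The adjoint-type action `h ▷ u = Σ γ(h₍₁₎) u γ(S h₍₂₎)` as a linear map in `h`. -/
noncomputable def actL {k H E : Type*} [Field k] [Ring H] [HopfAlgebra k H] [Ring E]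
    [Algebra k E] (γ : H →ₐ[k] E) (u : E) : H →ₗ[k] E :=
  LinearMap.mul' k E ∘ₗ
    TensorProduct.map ((LinearMap.mulRight k u) ∘ₗ γ.toLinearMap)
      (γ.toLinearMap ∘ₗ HopfAlgebra.antipode (R := k)) ∘ₗ Coalgebra.comul

/-- Let `E` be a right `H`-comodule algebra and `γ : H → E` a convolution-invertible
morphism of right `H`-comodule algebras.  Then for each `h ∈ H` and coinvariant `u`,
the element `h ▷ u := Σ γ(h₍₁₎) u γ(S h₍₂₎)` is again coinvariant, and `▷` makes the
coinvariants `E^{coH}` an `H`-module algebra. -/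
theorem stmt5 {k H E : Type*} [Field k] [Ring H] [HopfAlgebra k H] [Ring E] [Algebra k E]
    (ρ : E →ₐ[k] E ⊗[k] H)
    (hcoassoc : ∀ x : E, (TensorProduct.assoc k E H H)
        (LinearMap.rTensor H ρ.toLinearMap (ρ x)) =
      LinearMap.lTensor E (Coalgebra.comul (R := k)) (ρ x))
    (hcounit : ∀ x : E,
      (TensorProduct.rid k E) (LinearMap.lTensor E (Coalgebra.counit (R := k)) (ρ x)) = x)
    (γ : H →ₐ[k] E)
    (hγ : ∀ h : H, ρ (γ h) =
      TensorProduct.map γ.toLinearMap LinearMap.id (Coalgebra.comul (R := k) h)) :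
    -- the action preserves coinvariants
    (∀ (h : H) (u : E), ρ u = u ⊗ₜ (1 : H) →
      ρ (actL γ u h) = actL γ u h ⊗ₜ (1 : H)) ∧
    -- module axioms on the coinvariants
    (∀ u : E, ρ u = u ⊗ₜ (1 : H) → actL γ u (1 : H) = u) ∧
    (∀ (g h : H) (u : E), ρ u = u ⊗ₜ (1 : H) →
      actL γ u (g * h) = actL γ (actL γ u h) g) ∧
    -- module-algebra axioms:  h ▷ (uv) = Σ (h₍₁₎ ▷ u)(h₍₂₎ ▷ v)  and  h ▷ 1 = ε(h) 1
    (∀ (h : H) (u v : E), ρ u = u ⊗ₜ (1 : H) → ρ v = v ⊗ₜ (1 : H) →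
      actL γ (u * v) h =
        LinearMap.mul' k E
          (TensorProduct.map (actL γ u) (actL γ v) (Coalgebra.comul (R := k) h))) ∧
    (∀ h : H, actL γ (1 : E) h = Coalgebra.counit (R := k) h • (1 : E)) := by
  have hact : ∀ u : E, actL γ u = HopfAux.conv (LinearMap.mulRight k u ∘ₗ γ.toLinearMap)
      (γ.toLinearMap ∘ₗ HopfAlgebra.antipode (R := k)) := fun u => rfl
  refine ⟨?_, ?_, ?_, ?_, ?_⟩
  · -- stability of coinvariants
    intro h u hu
    rw [hact u]
    have := LinearMap.congr_fun (HopfAux.rho_comp_act (k := k) ρ γ hγ u hu) h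
    simpa using this
  · -- unit of H acts trivially
    intro u _
    have hc : Coalgebra.comul (R := k) (1 : H) = (1 : H) ⊗ₜ[k] (1 : H) := by
      rw [Bialgebra.comul_one, Algebra.TensorProduct.one_def]
    simp [actL, hc, HopfAux.antipode_one_eq]
  · -- multiplicativity of the action
    intro g h u _
    set rg := Coalgebra.Repr.arbitrary k g with hrg
    set rh := Coalgebra.Repr.arbitrary k h with hrh
    rw [hact (actL γ u h), hact u,
      HopfAux.conv_apply_repr _ _ (HopfAux.mulRepr rg rh),
      HopfAux.conv_apply_repr _ _ rg]
    refine Eq.trans (Finset.sum_product rg.index rh.index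
      (fun p => (LinearMap.mulRight k u ∘ₗ γ.toLinearMap) ((HopfAux.mulRepr rg rh).left p) *
        (γ.toLinearMap ∘ₗ HopfAlgebra.antipode (R := k))
          ((HopfAux.mulRepr rg rh).right p))) ?_
    refine Finset.sum_congr rfl fun i _ => ?_
    simp only [LinearMap.comp_apply, LinearMap.mulRight_apply, AlgHom.toLinearMap_apply,
      HopfAux.mulRepr_left, HopfAux.mulRepr_right]
    rw [HopfAux.conv_apply_repr _ _ rh, Finset.mul_sum, Finset.sum_mul]
    refine Finset.sum_congr rfl fun j _ => ?_
    rw [HopfAux.map_antipode_mul γ]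
    simp only [map_mul, LinearMap.comp_apply, LinearMap.mulRight_apply,
      AlgHom.toLinearMap_apply, mul_assoc]
  · -- the action is compatible with multiplication in E
    intro h u v _ _
    have key : actL γ (u * v) = HopfAux.conv (actL γ u) (actL γ v) := by
      rw [hact u, hact v, hact (u * v)]
      symm
      calc HopfAux.conv
            (HopfAux.conv (LinearMap.mulRight k u ∘ₗ γ.toLinearMap)
              (γ.toLinearMap ∘ₗ HopfAlgebra.antipode (R := k)))
            (HopfAux.conv (LinearMap.mulRight k v ∘ₗ γ.toLinearMap)
              (γ.toLinearMap ∘ₗ HopfAlgebra.antipode (R := k)))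
          = HopfAux.conv (LinearMap.mulRight k u ∘ₗ γ.toLinearMap)
              (HopfAux.conv (γ.toLinearMap ∘ₗ HopfAlgebra.antipode (R := k))
                (HopfAux.conv (LinearMap.mulRight k v ∘ₗ γ.toLinearMap)
                  (γ.toLinearMap ∘ₗ HopfAlgebra.antipode (R := k)))) :=
            HopfAux.conv_assoc _ _ _
        _ = HopfAux.conv (LinearMap.mulRight k u ∘ₗ γ.toLinearMap)
              (HopfAux.conv
                (HopfAux.conv (γ.toLinearMap ∘ₗ HopfAlgebra.antipode (R := k))
                  (LinearMap.mulRight k v ∘ₗ γ.toLinearMap))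
                (γ.toLinearMap ∘ₗ HopfAlgebra.antipode (R := k))) := by
            rw [HopfAux.conv_assoc]
        _ = HopfAux.conv (LinearMap.mulRight k u ∘ₗ γ.toLinearMap)
              (HopfAux.conv (LinearMap.mulRight k v ∘ₗ HopfAux.cunit)
                (γ.toLinearMap ∘ₗ HopfAlgebra.antipode (R := k))) := by
            rw [HopfAux.conv_mulRight, HopfAux.gammaS_conv_gamma]
        _ = HopfAux.conv (LinearMap.mulRight k u ∘ₗ γ.toLinearMap)
              (LinearMap.mulLeft k v ∘ₗ
                (γ.toLinearMap ∘ₗ HopfAlgebra.antipode (R := k))) := by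
            rw [HopfAux.conv_mulRight_cunit]
        _ = HopfAux.conv (LinearMap.mulRight k (u * v) ∘ₗ γ.toLinearMap)
              (γ.toLinearMap ∘ₗ HopfAlgebra.antipode (R := k)) :=
            HopfAux.conv_mulRight_mulLeft _ _ _ _
    rw [key]
    rfl
  · -- the action respects the unit of E
    intro h
    have h1 : LinearMap.mulRight k (1 : E) ∘ₗ γ.toLinearMap = γ.toLinearMap := by
      ext x; simp
    rw [hact 1, h1, HopfAux.gamma_conv_gammaS γ, HopfAux.cunit_apply]
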